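/- Let d_∞(μ₁,μ₂) = limsup_n sup_{x_{1..n}} (1/n)|log(μ₁(x_{1..n})/μ₂(x_{1..n}))|. If a set C of probability measures on X^∞ is separable with respect to d_∞ with dense countable subset (μ_k), then the mixture ν = Σ_k w_k μ_k (positive weights summing to 1) satisfies: for every probability measure τ and every μ ∈ C, limsup (1/n)L_n(τ,ν) ≤ limsup (1/n)L_n(τ,μ). In particular the asymptotic regret of ν with respect to C is zero. -/

import Mathlib

open Real Filter
open scoped Topology

noncomputable section

def IsProcess {X : Type} [Fintype X] (μ : (n : ℕ) → (Fin n → X) → ℝ) : Prop :=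
  (∀ n w, 0 ≤ μ n w) ∧ (∀ n, ∑ w : Fin n → X, μ n w = 1) ∧
  (∀ n (w : Fin n → X), μ n w = ∑ a : X, μ (n + 1) (Fin.snoc w a))

def klTerm (a b : ℝ) : EReal :=
  if a = 0 then 0 else if b = 0 then (⊤ : EReal) else ((a * Real.log (a / b) : ℝ) : EReal)

/-- Cumulative KL loss `L_n(μ,ρ)` (extended-real valued, `0·log(0/0) := 0`). -/
def KLE {X : Type} [Fintype X] (μ ρ : (n : ℕ) → (Fin n → X) → ℝ) (n : ℕ) : EReal :=
  ∑ w : Fin n → X, klTerm (μ n w) (ρ n w)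

/-- `|log(a/b)|` with the conventions `log 0/0 := 0` and the value `∞` when exactly one
of `a`, `b` vanishes. -/
def dTerm (a b : ℝ) : EReal :=
  if a = 0 ∧ b = 0 then 0
  else if a = 0 ∨ b = 0 then (⊤ : EReal)
  else ((|Real.log (a / b)| : ℝ) : EReal)

/-- The distance `d_∞(μ₁,μ₂) = limsup_n sup_{x_{1..n}} (1/n)|log(μ₁(x_{1..n})/μ₂(x_{1..n}))|`. -/
def dInfty {X : Type} [Fintype X] (μ₁ μ₂ : (n : ℕ) → (Fin n → X) → ℝ) : EReal :=
  Filter.limsup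
    (fun n : ℕ => (((n : ℝ)⁻¹ : ℝ) : EReal) * ⨆ w : Fin n → X, dTerm (μ₁ n w) (μ₂ n w))
    atTop

/-! ### Auxiliary lemmas -/

lemma ereal_coe_sum {ι : Type*} (s : Finset ι) (f : ι → ℝ) :
    ((∑ i ∈ s, f i : ℝ) : EReal) = ∑ i ∈ s, (f i : EReal) := by
  induction s using Finset.cons_induction with
  | empty => simp
  | cons a s ha ih => rw [Finset.sum_cons, Finset.sum_cons, EReal.coe_add, ih]

lemma ereal_mul_nonneg {a b : EReal} (ha : 0 ≤ a) (hb : 0 ≤ b) : 0 ≤ a * b :=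
  mul_nonneg ha hb

lemma ereal_mul_add_le (r : ℝ) (hr : 0 ≤ r) (a b : EReal) :
    (r : EReal) * (a + b) ≤ (r : EReal) * a + (r : EReal) * b := by
  rcases hr.eq_or_lt with rfl | hr
  · simp
  induction a with
  | bot => simp [EReal.coe_mul_bot_of_pos hr]
  | coe a =>
    induction b with
    | bot => simp [EReal.coe_mul_bot_of_pos hr]
    | coe b => rw [← EReal.coe_add, ← EReal.coe_mul, ← EReal.coe_mul, ← EReal.coe_mul,
        ← EReal.coe_add, mul_add]
    | top => rw [EReal.add_top_of_ne_bot (EReal.coe_ne_bot a), EReal.coe_mul_top_of_pos hr,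
        ← EReal.coe_mul, EReal.add_top_of_ne_bot (EReal.coe_ne_bot _)]
  | top =>
    induction b with
    | bot => simp [EReal.coe_mul_bot_of_pos hr]
    | coe b => rw [EReal.top_add_of_ne_bot (EReal.coe_ne_bot b), EReal.coe_mul_top_of_pos hr,
        ← EReal.coe_mul, EReal.top_add_of_ne_bot (EReal.coe_ne_bot _)]
    | top => rw [EReal.top_add_top, EReal.coe_mul_top_of_pos hr, EReal.top_add_top]

lemma ereal_le_of_forall_eps {a b : EReal} (h : ∀ ε : ℝ, 0 < ε → a ≤ b + (ε : EReal)) : a ≤ b := by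
  induction b with
  | bot => simpa using h 1 one_pos
  | coe b =>
    induction a with
    | bot => exact bot_le
    | coe a =>
      refine EReal.coe_le_coe_iff.2 (le_of_forall_pos_le_add fun ε hε => ?_)
      exact_mod_cast h ε hε
    | top =>
      have := h 1 one_pos
      rw [← EReal.coe_add] at this
      exact (EReal.coe_ne_top _ (top_le_iff.1 this)).elim
  | top => exact le_top

lemma dTerm_nonneg (a b : ℝ) : 0 ≤ dTerm a b := by
  unfold dTerm
  split_ifs with h1 h2
  · exact le_refl _
  · exact le_top
  · exact EReal.coe_nonneg.2 (abs_nonneg _)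

lemma klTerm_ne_bot (a b : ℝ) : klTerm a b ≠ ⊥ := by
  unfold klTerm
  split_ifs with h1 h2
  · exact EReal.bot_lt_zero.ne'
  · exact top_ne_bot
  · exact EReal.coe_ne_bot _

lemma klTerm_chain {t m mk nu wk : ℝ} (ht : 0 ≤ t) (hm : 0 ≤ m) (hmk : 0 ≤ mk)
    (hwk : 0 < wk) (hnu : wk * mk ≤ nu) {D : EReal} (hD : dTerm m mk ≤ D) (hD0 : 0 ≤ D) :
    klTerm t nu ≤ klTerm t m + (t : EReal) * D + (t : EReal) * ((- Real.log wk : ℝ) : EReal) := by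
  rcases ht.eq_or_lt with rfl | htpos
  · simp [klTerm]
  have ht0 : t ≠ 0 := ne_of_gt htpos
  have htD : (0 : EReal) ≤ (t : EReal) * D :=
    ereal_mul_nonneg (EReal.coe_nonneg.2 htpos.le) hD0
  rcases hm.eq_or_lt with rfl | hmpos
  · have h1 : klTerm t (0:ℝ) = ⊤ := by simp [klTerm, ht0]
    rw [h1, EReal.top_add_of_ne_bot (fun hb => by simp [hb] at htD), ← EReal.coe_mul,
      EReal.top_add_of_ne_bot (EReal.coe_ne_bot _)]
    exact le_top
  rcases hmk.eq_or_lt with rfl | hmkpos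
  · have hdt : dTerm m 0 = ⊤ := by simp [dTerm, hmpos.ne']
    have hDtop : D = ⊤ := top_le_iff.1 (hdt ▸ hD)
    rw [hDtop, EReal.coe_mul_top_of_pos htpos,
      EReal.add_top_of_ne_bot (klTerm_ne_bot _ _), ← EReal.coe_mul,
      EReal.top_add_of_ne_bot (EReal.coe_ne_bot _)]
    exact le_top
  · have hnupos : 0 < nu := lt_of_lt_of_le (mul_pos hwk hmkpos) hnu
    have e1 : klTerm t nu = ((t * Real.log (t / nu) : ℝ) : EReal) := by
      simp [klTerm, ht0, hnupos.ne']
    have e2 : klTerm t m = ((t * Real.log (t / m) : ℝ) : EReal) := by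
      simp [klTerm, ht0, hmpos.ne']
    have e3 : dTerm m mk = ((|Real.log (m / mk)| : ℝ) : EReal) := by
      simp [dTerm, hmpos.ne', hmkpos.ne']
    have key : t * Real.log (t / nu) ≤
        t * Real.log (t / m) + t * |Real.log (m / mk)| + t * (-Real.log wk) := by
      rw [Real.log_div ht0 hnupos.ne', Real.log_div ht0 hmpos.ne',
        Real.log_div hmpos.ne' hmkpos.ne']
      have h1 : Real.log wk + Real.log mk ≤ Real.log nu := by
        rw [← Real.log_mul hwk.ne' hmkpos.ne']
        exact Real.log_le_log (mul_pos hwk hmkpos) hnu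
      have h2 : Real.log m - Real.log mk ≤ |Real.log m - Real.log mk| := le_abs_self _
      nlinarith [mul_nonneg htpos.le (sub_nonneg.2 h1), mul_nonneg htpos.le (sub_nonneg.2 h2)]
    calc klTerm t nu = ((t * Real.log (t / nu) : ℝ) : EReal) := e1
      _ ≤ ((t * Real.log (t / m) + t * |Real.log (m / mk)| + t * (-Real.log wk) : ℝ) : EReal) :=
        EReal.coe_le_coe_iff.2 key
      _ = ((t * Real.log (t / m) : ℝ) : EReal) + ((t * |Real.log (m / mk)| : ℝ) : EReal)
          + ((t * (-Real.log wk) : ℝ) : EReal) := by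
        rw [EReal.coe_add, EReal.coe_add]
      _ ≤ klTerm t m + (t : EReal) * D + (t : EReal) * ((- Real.log wk : ℝ) : EReal) := by
        refine add_le_add (add_le_add e2.ge ?_) (le_of_eq ?_)
        · rw [EReal.coe_mul]
          exact mul_le_mul_of_nonneg_left (e3 ▸ hD) (EReal.coe_nonneg.2 htpos.le)
        · rw [EReal.coe_mul]

/-- If `C` is separable w.r.t. `d_∞` with dense countable subset `(μ_k)`, then the mixture
`ν = Σ_k w_k μ_k` satisfies, for every measure `τ` and every `μ ∈ C`,
`limsup (1/n) L_n(τ,ν) ≤ limsup (1/n) L_n(τ,μ)`; in particular `ν` has vanishing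
asymptotic regret with respect to `C`. -/
theorem dInfty_separable_mixture_regret
    {X : Type} [Fintype X]
    (C : Set ((n : ℕ) → (Fin n → X) → ℝ)) (hC : ∀ μ ∈ C, IsProcess μ)
    (μ_ : ℕ → (n : ℕ) → (Fin n → X) → ℝ) (hμmem : ∀ k, μ_ k ∈ C)
    (hdense : ∀ μ ∈ C, ∀ ε : ℝ, 0 < ε → ∃ k, dInfty μ (μ_ k) ≤ (ε : EReal))
    (w : ℕ → ℝ) (hw : ∀ k, 0 < w k) (hws : ∑' k, w k = 1)
    (ν : (n : ℕ) → (Fin n → X) → ℝ)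
    (hνmix : ∀ (n : ℕ) (v : Fin n → X), ν n v = ∑' k, w k * μ_ k n v) :
    ∀ τ : (n : ℕ) → (Fin n → X) → ℝ, IsProcess τ →
      ∀ μ ∈ C,
        Filter.limsup (fun n : ℕ => (((n : ℝ)⁻¹ : ℝ) : EReal) * KLE τ ν n) atTop ≤
        Filter.limsup (fun n : ℕ => (((n : ℝ)⁻¹ : ℝ) : EReal) * KLE τ μ n) atTop := by
  intro τ hτ μ hμ
  obtain ⟨hτ0, hτ1, -⟩ := hτ
  -- `X` is nonempty (else `∑ = 1` fails at `n = 1`)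
  have hXne : Nonempty X := by
    by_contra h
    haveI : IsEmpty (Fin 1 → X) := ⟨fun f => h ⟨f 0⟩⟩
    have := hτ1 1
    rw [Finset.univ_eq_empty, Finset.sum_empty] at this
    norm_num at this
  have hsw : Summable w := by
    by_contra h
    rw [tsum_eq_zero_of_not_summable h] at hws
    norm_num at hws
  refine ereal_le_of_forall_eps fun ε hε => ?_
  obtain ⟨k, hk⟩ := hdense μ hμ (ε / 3) (by linarith)
  set c : ℝ := -Real.log (w k) with hc_def
  -- the per-`n` key inequality
  have hmain : ∀ n : ℕ, KLE τ ν n ≤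
      KLE τ μ n + (⨆ v : Fin n → X, dTerm (μ n v) (μ_ k n v)) + ((c : ℝ) : EReal) := by
    intro n
    haveI : Nonempty (Fin n → X) := ⟨fun _ => Classical.arbitrary X⟩
    set D := ⨆ v : Fin n → X, dTerm (μ n v) (μ_ k n v) with hDdef
    have hD0 : 0 ≤ D :=
      le_trans (dTerm_nonneg _ _)
        (le_iSup (fun v => dTerm (μ n v) (μ_ k n v)) (Classical.arbitrary _))
    have hstep : ∀ v : Fin n → X, klTerm (τ n v) (ν n v) ≤
        klTerm (τ n v) (μ n v) + (τ n v : EReal) * D + (τ n v : EReal) * ((c : ℝ) : EReal) := by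
      intro v
      refine klTerm_chain (hτ0 n v) ((hC μ hμ).1 n v) ((hC (μ_ k) (hμmem k)).1 n v) (hw k)
        ?_ (le_trans (le_iSup (fun v => dTerm (μ n v) (μ_ k n v)) v) (le_of_eq hDdef.symm)) hD0
      rw [hνmix n v]
      have hnn : ∀ j, 0 ≤ w j * μ_ j n v :=
        fun j => mul_nonneg (hw j).le ((hC (μ_ j) (hμmem j)).1 n v)
      have hsum : Summable (fun j => w j * μ_ j n v) := by
        refine Summable.of_nonneg_of_le hnn (fun j => ?_) hsw
        have hle1 : μ_ j n v ≤ 1 := by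
          calc μ_ j n v ≤ ∑ u : Fin n → X, μ_ j n u :=
                Finset.single_le_sum (fun u _ => (hC (μ_ j) (hμmem j)).1 n u) (Finset.mem_univ v)
            _ = 1 := (hC (μ_ j) (hμmem j)).2.1 n
        nlinarith [(hw j).le]
      exact Summable.le_tsum hsum k (fun j _ => hnn j)
    calc KLE τ ν n = ∑ v : Fin n → X, klTerm (τ n v) (ν n v) := rfl
      _ ≤ ∑ v : Fin n → X, (klTerm (τ n v) (μ n v) + (τ n v : EReal) * D
            + (τ n v : EReal) * ((c : ℝ) : EReal)) :=
        Finset.sum_le_sum (fun v _ => hstep v)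
      _ = KLE τ μ n + (∑ v : Fin n → X, (τ n v : EReal) * D)
            + (∑ v : Fin n → X, (τ n v : EReal) * ((c : ℝ) : EReal)) := by
        rw [Finset.sum_add_distrib, Finset.sum_add_distrib]; rfl
      _ ≤ KLE τ μ n + D + ((c : ℝ) : EReal) := by
        refine add_le_add (add_le_add_right ?_ _) (le_of_eq ?_)
        · rcases eq_or_ne D ⊤ with hDt | hDt
          · rw [hDt]; exact le_top
          · obtain ⟨d, hd⟩ : ∃ d : ℝ, D = (d : EReal) :=
              ⟨D.toReal, (EReal.coe_toReal hDt (EReal.bot_lt_zero.trans_le hD0).ne').symm⟩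
            rw [hd]
            refine le_of_eq ?_
            calc ∑ v : Fin n → X, (τ n v : EReal) * (d : EReal)
                = ∑ v : Fin n → X, ((τ n v * d : ℝ) : EReal) := by
                  simp [EReal.coe_mul]
              _ = (((∑ v : Fin n → X, τ n v * d) : ℝ) : EReal) := (ereal_coe_sum _ _).symm
              _ = ((d : ℝ) : EReal) := by rw [← Finset.sum_mul, hτ1 n, one_mul]
        · calc ∑ v : Fin n → X, (τ n v : EReal) * ((c : ℝ) : EReal)
              = ∑ v : Fin n → X, ((τ n v * c : ℝ) : EReal) := by
                simp [EReal.coe_mul]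
            _ = (((∑ v : Fin n → X, τ n v * c) : ℝ) : EReal) := (ereal_coe_sum _ _).symm
            _ = ((c : ℝ) : EReal) := by rw [← Finset.sum_mul, hτ1 n, one_mul]
  -- an eventual bound on the `D` part from the density hypothesis
  have hDlt : ∀ᶠ n : ℕ in atTop, (((n : ℝ)⁻¹ : ℝ) : EReal)
      * (⨆ v : Fin n → X, dTerm (μ n v) (μ_ k n v)) < ((2 * ε / 3 : ℝ) : EReal) := by
    refine Filter.eventually_lt_of_limsup_lt (lt_of_le_of_lt hk ?_)
    exact_mod_cast (by linarith : ε / 3 < 2 * ε / 3)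
  -- an eventual bound on the weight part
  have hclt : ∀ᶠ n : ℕ in atTop, (((n : ℝ)⁻¹ : ℝ) : EReal) * ((c : ℝ) : EReal)
      ≤ ((ε / 3 : ℝ) : EReal) := by
    obtain ⟨N, hN⟩ := exists_nat_gt (|c| / (ε / 3))
    filter_upwards [eventually_ge_atTop (N + 1)] with n hn
    have hnpos : (0 : ℝ) < n := by
      have : 0 < n := lt_of_lt_of_le (Nat.succ_pos N) hn
      exact_mod_cast this
    rw [← EReal.coe_mul]
    refine EReal.coe_le_coe_iff.2 ?_
    have hNn : (N : ℝ) ≤ n := by exact_mod_cast le_trans (Nat.le_succ N) hn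
    have h1 : |c| / (ε / 3) < (n : ℝ) := lt_of_lt_of_le hN hNn
    have h2 : |c| < (n : ℝ) * (ε / 3) := by
      rwa [div_lt_iff₀ (by linarith)] at h1
    calc (n : ℝ)⁻¹ * c ≤ (n : ℝ)⁻¹ * |c| :=
          mul_le_mul_of_nonneg_left (le_abs_self c) (by positivity)
      _ ≤ (n : ℝ)⁻¹ * ((n : ℝ) * (ε / 3)) :=
          mul_le_mul_of_nonneg_left h2.le (by positivity)
      _ = ε / 3 := by field_simp
  -- combine into an eventual inequality
  have hev : ∀ᶠ n : ℕ in atTop, (((n : ℝ)⁻¹ : ℝ) : EReal) * KLE τ ν n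
      ≤ (((n : ℝ)⁻¹ : ℝ) : EReal) * KLE τ μ n + ((ε : ℝ) : EReal) := by
    filter_upwards [hDlt, hclt] with n hD hc
    have hr : (0 : ℝ) ≤ (n : ℝ)⁻¹ := inv_nonneg.2 (Nat.cast_nonneg n)
    calc (((n : ℝ)⁻¹ : ℝ) : EReal) * KLE τ ν n
        ≤ (((n : ℝ)⁻¹ : ℝ) : EReal) * (KLE τ μ n
            + (⨆ v : Fin n → X, dTerm (μ n v) (μ_ k n v)) + ((c : ℝ) : EReal)) :=
          mul_le_mul_of_nonneg_left (hmain n) (EReal.coe_nonneg.2 hr)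
      _ ≤ (((n : ℝ)⁻¹ : ℝ) : EReal) * (KLE τ μ n
            + (⨆ v : Fin n → X, dTerm (μ n v) (μ_ k n v)))
            + (((n : ℝ)⁻¹ : ℝ) : EReal) * ((c : ℝ) : EReal) :=
          ereal_mul_add_le _ hr _ _
      _ ≤ ((((n : ℝ)⁻¹ : ℝ) : EReal) * KLE τ μ n
            + (((n : ℝ)⁻¹ : ℝ) : EReal) * (⨆ v : Fin n → X, dTerm (μ n v) (μ_ k n v)))
            + (((n : ℝ)⁻¹ : ℝ) : EReal) * ((c : ℝ) : EReal) :=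
          add_le_add_left (ereal_mul_add_le _ hr _ _) _
      _ ≤ ((((n : ℝ)⁻¹ : ℝ) : EReal) * KLE τ μ n + ((2 * ε / 3 : ℝ) : EReal))
            + ((ε / 3 : ℝ) : EReal) :=
          add_le_add (add_le_add_right hD.le _) hc
      _ = (((n : ℝ)⁻¹ : ℝ) : EReal) * KLE τ μ n + ((ε : ℝ) : EReal) := by
          rw [add_assoc, ← EReal.coe_add, show 2 * ε / 3 + ε / 3 = ε by ring]
  calc Filter.limsup (fun n : ℕ => (((n : ℝ)⁻¹ : ℝ) : EReal) * KLE τ ν n) atTop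
      ≤ Filter.limsup (fun n : ℕ =>
          (((n : ℝ)⁻¹ : ℝ) : EReal) * KLE τ μ n + ((ε : ℝ) : EReal)) atTop :=
        Filter.limsup_le_limsup hev
    _ ≤ Filter.limsup (fun n : ℕ => (((n : ℝ)⁻¹ : ℝ) : EReal) * KLE τ μ n) atTop
          + Filter.limsup (fun _ : ℕ => ((ε : ℝ) : EReal)) atTop := by
        refine EReal.limsup_add_le ?_ ?_
        · exact Or.inr (by rw [Filter.limsup_const]; exact EReal.coe_ne_top ε)
        · exact Or.inr (by rw [Filter.limsup_const]; exact EReal.coe_ne_bot ε)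
    _ = Filter.limsup (fun n : ℕ => (((n : ℝ)⁻¹ : ℝ) : EReal) * KLE τ μ n) atTop
          + ((ε : ℝ) : EReal) := by rw [Filter.limsup_const]
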